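/- Consider a sequential execution from q of all k competing invocations o_1, …, o_k, each exactly once and in an arbitrary order, and let (β', α') be the final state. Then the set W = {i ∈ {2, …, k} : α'(a_1, p_i) = 0} contains at most one element; W = ∅ if and only if o_1 (the transfer by the owner p_1) is the unique successful invocation, and W = {i} if and only if o_i is the unique successful invocation; moreover α'(a_1, p_j) = A_j for every j ∈ {2, …, k} \ W. -/

import Mathlib

/-- A token state: balances and allowances. -/
structure TokenState (A P : Type*) where
  bal : A → ℕ
  alw : A × P → ℕ

variable {A P : Type*} [DecidableEq A] [DecidableEq P] [Fintype A] [Fintype P]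

/-- The set of enabled spenders of account `a` in state `q`. -/
def spenders (ω : A ≃ P) (q : TokenState A P) (a : A) : Finset P :=
  if q.bal a = 0 then {ω a}
  else Finset.univ.filter fun p => p = ω a ∨ 0 < q.alw (a, p)

/-- The maximum, over all accounts, of the number of enabled spenders. -/
def maxSpenders (ω : A ≃ P) (q : TokenState A P) : ℕ :=
  Finset.univ.sup fun a => (spenders ω q a).card

/-- `Qset ω k` is the set of token states whose maximal number of enabled
spenders for a single account equals `k`. -/
def Qset (ω : A ≃ P) (k : ℕ) : Set (TokenState A P) :=
  {q | maxSpenders ω q = k}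

/-- `transfer(a_d, v)` invoked by process `p`. Returns the new state and the response. -/
def transferOp (ω : A ≃ P) (p : P) (ad : A) (v : ℕ) (q : TokenState A P) :
    TokenState A P × Bool :=
  if v ≤ q.bal (ω.symm p) then
    (⟨Function.update (Function.update q.bal (ω.symm p) (q.bal (ω.symm p) - v)) ad
        (Function.update q.bal (ω.symm p) (q.bal (ω.symm p) - v) ad + v), q.alw⟩, true)
  else (q, false)

/-- `transferFrom(a_s, a_d, v)` invoked by process `p`. -/
def transferFromOp (p : P) (asrc ad : A) (v : ℕ) (q : TokenState A P) :
    TokenState A P × Bool :=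
  if v ≤ q.bal asrc ∧ v ≤ q.alw (asrc, p) then
    (⟨Function.update (Function.update q.bal asrc (q.bal asrc - v)) ad
        (Function.update q.bal asrc (q.bal asrc - v) ad + v),
      Function.update q.alw (asrc, p) (q.alw (asrc, p) - v)⟩, true)
  else (q, false)

/-- `approve(p̄, v)` invoked by process `p`: always succeeds and sets `α(a_p, p̄) := v`. -/
def approveOp (ω : A ≃ P) (p pbar : P) (v : ℕ) (q : TokenState A P) :
    TokenState A P × Bool :=
  (⟨q.bal, Function.update q.alw (ω.symm p, pbar) v⟩, true)

/-- Sequential execution of a list of invocations: the final state. -/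
def execRun {ι : Type*} (ops : ι → TokenState A P → TokenState A P × Bool) :
    List ι → TokenState A P → TokenState A P
  | [], q => q
  | i :: r, q => execRun ops r (ops i q).1

/-- Sequential execution of a list of invocations, recording each invocation
together with its response. -/
def runRes {ι : Type*} (ops : ι → TokenState A P → TokenState A P × Bool) :
    List ι → TokenState A P → List (ι × Bool)
  | [], _ => []
  | i :: r, q => (i, (ops i q).2) :: runRes ops r (ops i q).1

/-- The competing invocations: `o_0` is `transfer(a_d, B)` by the owner `p 0`,
and for `i ≠ 0`, `o_i` is `transferFrom(a_1, a_d, A_i)` by `p i`, where `B` and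
`A_i` are the balance and allowances in the fixed starting state `q`. -/
def compOps (ω : A ≃ P) (q : TokenState A P) (a1 ad : A) {k : ℕ} [NeZero k]
    (p : Fin k → P) (i : Fin k) : TokenState A P → TokenState A P × Bool :=
  if i = 0 then transferOp ω (p 0) ad (q.bal a1)
  else transferFromOp (p i) a1 ad (q.alw (a1, p i))

/-- Auxiliary invariant: no successful invocation yet. -/
def Inv1 (q : TokenState A P) (a1 : A) {k : ℕ} [NeZero k] (p : Fin k → P)
    (s : TokenState A P) : Prop :=
  s.bal a1 = q.bal a1 ∧ ∀ j : Fin k, j ≠ 0 → s.alw (a1, p j) = q.alw (a1, p j)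

/-- Auxiliary invariant: the invocation `i0` has succeeded; everything else fails. -/
def Inv2 (q : TokenState A P) (a1 : A) {k : ℕ} [NeZero k] (p : Fin k → P)
    (i0 : Fin k) (s : TokenState A P) : Prop :=
  s.bal a1 < q.bal a1 ∧
  (∀ j : Fin k, j ≠ 0 → j ≠ i0 →
    s.alw (a1, p j) = q.alw (a1, p j) ∧ s.bal a1 < q.alw (a1, p j)) ∧
  (i0 ≠ 0 → s.alw (a1, p i0) = 0)

/-- let `(β', α')` be the final state of a sequential execution
from `q` of all `k` competing invocations, each exactly once, in an arbitrary
order. Then `W = {i ≠ 0 : α'(a_1, p_i) = 0}` has at most one element; `W = ∅`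
iff the owner's `transfer` is the unique successful invocation, `W = {i}` iff
`o_i` is the unique successful invocation; and `α'(a_1, p_j) = A_j` for every
non-owner index `j ∉ W`. -/
theorem stmt6 (n : ℕ) (hn : 1 ≤ n)
    (hcA : Fintype.card A = n) (hcP : Fintype.card P = n) (ω : A ≃ P)
    (q : TokenState A P) (a1 ad : A) (had : ad ≠ a1)
    (k : ℕ) [NeZero k] (hkn : k ≤ n)
    (p : Fin k → P) (hinj : Function.Injective p) (hp1 : p 0 = ω a1)
    (hB : 0 < q.bal a1)
    (hAi : ∀ i : Fin k, i ≠ 0 → 0 < q.alw (a1, p i))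
    (hut : k ≤ 2 ∨ ∀ i j : Fin k, i ≠ 0 → j ≠ 0 → i ≠ j →
      q.bal a1 < q.alw (a1, p i) + q.alw (a1, p j)) :
    ∀ l : List (Fin k), l.Nodup → (∀ i : Fin k, i ∈ l) →
      let q' := execRun (compOps ω q a1 ad p) l q
      let W : Finset (Fin k) :=
        Finset.univ.filter fun i => i ≠ 0 ∧ q'.alw (a1, p i) = 0
      W.card ≤ 1 ∧
      (W = ∅ ↔
        (((0 : Fin k), true) ∈ runRes (compOps ω q a1 ad p) l q ∧
          ∀ x ∈ runRes (compOps ω q a1 ad p) l q, x.2 = true → x.1 = 0)) ∧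
      (∀ i : Fin k, i ≠ 0 →
        (W = {i} ↔
          ((i, true) ∈ runRes (compOps ω q a1 ad p) l q ∧
            ∀ x ∈ runRes (compOps ω q a1 ad p) l q, x.2 = true → x.1 = i))) ∧
      ∀ j : Fin k, j ≠ 0 → j ∉ W → q'.alw (a1, p j) = q.alw (a1, p j) := by
  intro l hnd hall q' W
  have hq'def : q' = execRun (compOps ω q a1 ad p) l q := rfl
  have hWdef : W = Finset.univ.filter fun i => i ≠ 0 ∧ q'.alw (a1, p i) = 0 := rfl
  clear hnd
  have ha1 : ω.symm (p 0) = a1 := by rw [hp1, Equiv.symm_apply_apply]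
  have hane : a1 ≠ ad := Ne.symm had
  set ops := compOps ω q a1 ad p with hops
  have hcomp0 : ops 0 = transferOp ω (p 0) ad (q.bal a1) := by
    rw [hops]; simp [compOps]
  have hcompi : ∀ i : Fin k, i ≠ 0 →
      ops i = transferFromOp (p i) a1 ad (q.alw (a1, p i)) := by
    intro i hi; rw [hops]; simp [compOps, hi]
  -- any op fails from an Inv2 state
  have hfail : ∀ (i0 i : Fin k) (s : TokenState A P), Inv2 q a1 p i0 s →
      ops i s = (s, false) := by
    rintro i0 i s ⟨h1, h2, h3⟩
    by_cases hi : i = 0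
    · subst hi
      rw [hcomp0]
      simp only [transferOp, ha1]
      rw [if_neg (by omega)]
    · rw [hcompi i hi]
      simp only [transferFromOp]
      have hcond : ¬(q.alw (a1, p i) ≤ s.bal a1 ∧
          q.alw (a1, p i) ≤ s.alw (a1, p i)) := by
        rintro ⟨hb, ha⟩
        by_cases hii : i = i0
        · subst hii
          rw [h3 hi] at ha
          have := hAi i hi
          omega
        · exact absurd hb (not_le.2 (h2 i hi hii).2)
      rw [if_neg hcond]
  -- from an Inv2 state, running anything changes nothing and all ops fail
  have absorb : ∀ (l' : List (Fin k)) (i0 : Fin k) (s : TokenState A P),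
      Inv2 q a1 p i0 s →
      execRun ops l' s = s ∧ ∀ x ∈ runRes ops l' s, x.2 = false := by
    intro l'
    induction l' with
    | nil => intro i0 s _; exact ⟨rfl, by simp [runRes]⟩
    | cons i r ih =>
      intro i0 s h
      have hf := hfail i0 i s h
      constructor
      · simp only [execRun, hf]
        exact (ih i0 s h).1
      · intro x hx
        simp only [runRes, hf, List.mem_cons] at hx
        rcases hx with rfl | hx
        · rfl
        · exact (ih i0 s h).2 x hx
  -- op 0 succeeds from an Inv1 state
  have hstep0 : ∀ s : TokenState A P, Inv1 q a1 p s →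
      (ops 0 s).2 = true ∧ Inv2 q a1 p 0 (ops 0 s).1 := by
    rintro s ⟨h1, h2⟩
    rw [hcomp0]
    unfold transferOp
    rw [ha1, if_pos (le_of_eq h1.symm)]
    have hbal : (Function.update (Function.update s.bal a1 (s.bal a1 - q.bal a1)) ad
        (Function.update s.bal a1 (s.bal a1 - q.bal a1) ad + q.bal a1)) a1 = 0 := by
      rw [Function.update_of_ne hane, Function.update_self, h1]
      omega
    refine ⟨rfl, ?_, ?_, fun h => absurd rfl h⟩
    · simpa [hbal] using hB
    · intro j hj _
      refine ⟨h2 j hj, ?_⟩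
      simp only [hbal]
      exact hAi j hj
  -- successful non-owner op from an Inv1 state yields Inv2
  have hstepi : ∀ (i : Fin k) (s : TokenState A P), i ≠ 0 → Inv1 q a1 p s →
      (ops i s).2 = true → Inv2 q a1 p i (ops i s).1 := by
    rintro i s hi ⟨h1, h2⟩ ht
    rw [hcompi i hi] at ht ⊢
    simp only [transferFromOp] at ht ⊢
    split_ifs at ht ⊢ with hc
    · obtain ⟨hb, -⟩ := hc
      have hAipos := hAi i hi
      have hbal : (Function.update (Function.update s.bal a1 (s.bal a1 - q.alw (a1, p i))) ad
          (Function.update s.bal a1 (s.bal a1 - q.alw (a1, p i)) ad + q.alw (a1, p i))) a1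
          = s.bal a1 - q.alw (a1, p i) := by
        rw [Function.update_of_ne hane, Function.update_self]
      refine ⟨?_, ?_, ?_⟩
      · simp only [hbal]; omega
      · intro j hj hji
        have hpji : (a1, p j) ≠ (a1, p i) :=
          fun hpe => hji (hinj (congrArg Prod.snd hpe))
        refine ⟨by simp only [Function.update_of_ne hpji]; exact h2 j hj, ?_⟩
        simp only [hbal, Function.update_of_ne hpji, h2 j hj]
        rcases hut with hk2 | hut'
        · exfalso
          have hik := i.isLt
          have hjk := j.isLt
          have hi' : i.val ≠ 0 := fun h => hi (Fin.ext (by rw [h]; simp))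
          have hj' : j.val ≠ 0 := fun h => hj (Fin.ext (by rw [h]; simp))
          have hij' : j.val ≠ i.val := fun h => hji (Fin.ext h)
          omega
        · have := hut' i j hi hj (fun h => hji h.symm)
          omega
      · intro _
        simp only [Function.update_self]
        rw [h2 i hi]
        omega
  -- a failed op leaves the state unchanged
  have hopfalse : ∀ (i : Fin k) (s : TokenState A P),
      (ops i s).2 = false → (ops i s).1 = s := by
    intro i s h
    by_cases hi : i = 0
    · subst hi
      rw [hcomp0] at h ⊢
      simp only [transferOp] at h ⊢
      split_ifs at h ⊢
      rfl
    · rw [hcompi i hi] at h ⊢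
      simp only [transferFromOp] at h ⊢
      split_ifs at h ⊢
      rfl
  -- main induction
  have main : ∀ (l' : List (Fin k)) (s : TokenState A P), Inv1 q a1 p s →
      ((0 : Fin k) ∉ l' ∧ ∀ x ∈ runRes ops l' s, x.2 = false) ∨
      (∃ i0 : Fin k, (i0, true) ∈ runRes ops l' s ∧
        (∀ x ∈ runRes ops l' s, x.2 = true → x.1 = i0) ∧
        Inv2 q a1 p i0 (execRun ops l' s)) := by
    intro l'
    induction l' with
    | nil =>
      intro s _
      exact Or.inl ⟨by simp, by simp [runRes]⟩
    | cons i r ih =>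
      intro s h
      by_cases hi : i = 0
      · subst hi
        obtain ⟨ht, hinv⟩ := hstep0 s h
        obtain ⟨he, hr⟩ := absorb r 0 _ hinv
        refine Or.inr ⟨0, ?_, ?_, ?_⟩
        · simp [runRes, ht]
        · intro x hx hxt
          simp only [runRes, List.mem_cons] at hx
          rcases hx with rfl | hx
          · rfl
          · rw [hr x hx] at hxt; exact absurd hxt (by simp)
        · simp only [execRun, he]
          exact hinv
      · cases htb : (ops i s).2 with
        | false =>
          have hs := hopfalse i s htb
          rcases ih s h with ⟨h0, hallf⟩ | ⟨i0, hmem, huni, hinv⟩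
          · refine Or.inl ⟨?_, ?_⟩
            · simp only [List.mem_cons, not_or]
              exact ⟨fun h' => hi h'.symm, h0⟩
            · intro x hx
              simp only [runRes, htb, hs, List.mem_cons] at hx
              rcases hx with rfl | hx
              · rfl
              · exact hallf x hx
          · refine Or.inr ⟨i0, ?_, ?_, ?_⟩
            · simp only [runRes, htb, hs, List.mem_cons]
              exact Or.inr hmem
            · intro x hx hxt
              simp only [runRes, htb, hs, List.mem_cons] at hx
              rcases hx with rfl | hx
              · exact absurd hxt (by simp)
              · exact huni x hx hxt
            · simp only [execRun, hs]
              exact hinv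
        | true =>
          have hinv := hstepi i s hi h htb
          obtain ⟨he, hr⟩ := absorb r i _ hinv
          refine Or.inr ⟨i, ?_, ?_, ?_⟩
          · simp [runRes, htb]
          · intro x hx hxt
            simp only [runRes, htb, List.mem_cons] at hx
            rcases hx with rfl | hx
            · rfl
            · rw [hr x hx] at hxt; exact absurd hxt (by simp)
          · simp only [execRun, he]
            exact hinv
  -- apply to the full list
  rcases main l q ⟨rfl, fun _ _ => rfl⟩ with ⟨h0, -⟩ | ⟨i0, hmem, huni, hinv⟩
  · exact absurd (hall 0) h0
  rw [← hq'def] at hinv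
  obtain ⟨hb1, hb2, hb3⟩ := hinv
  have hWmem : ∀ j : Fin k, j ∈ W ↔ j ≠ 0 ∧ q'.alw (a1, p j) = 0 := by
    intro j
    rw [hWdef]
    simp [Finset.mem_filter]
  have hW : ∀ j : Fin k, j ∈ W ↔ j = i0 ∧ i0 ≠ 0 := by
    intro j
    rw [hWmem]
    constructor
    · rintro ⟨hj0, hj⟩
      by_cases hji : j = i0
      · exact ⟨hji, hji ▸ hj0⟩
      · have h1 := (hb2 j hj0 hji).1
        have h2 := hAi j hj0
        omega
    · rintro ⟨rfl, h0⟩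
      exact ⟨h0, hb3 h0⟩
  refine ⟨?_, ?_, ?_, ?_⟩
  · -- card ≤ 1
    have hsub : W ⊆ {i0} := by
      intro j hj
      rw [Finset.mem_singleton]
      exact ((hW j).1 hj).1
    calc W.card ≤ ({i0} : Finset (Fin k)).card := Finset.card_le_card hsub
      _ = 1 := Finset.card_singleton i0
  · -- W = ∅ iff owner uniquely succeeds
    by_cases hi0 : i0 = 0
    · subst hi0
      have hWe : W = ∅ := by
        ext j
        simp only [Finset.notMem_empty, iff_false]
        intro hj
        exact ((hW j).1 hj).2 rfl
      rw [hWe]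
      simp only [true_iff]
      exact ⟨hmem, huni⟩
    · have hWne : W ≠ ∅ := by
        intro h
        have : i0 ∈ W := (hW i0).2 ⟨rfl, hi0⟩
        rw [h] at this
        exact absurd this (Finset.notMem_empty i0)
      refine iff_of_false hWne ?_
      rintro ⟨hm, -⟩
      exact hi0 (huni _ hm rfl).symm
  · -- W = {i} iff o_i uniquely succeeds
    intro i hi
    by_cases hii : i0 = i
    · subst hii
      have hWe : W = {i0} := by
        ext j
        rw [Finset.mem_singleton, hW]
        exact ⟨fun h => h.1, fun h => ⟨h, hi⟩⟩
      rw [hWe]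
      simp only [true_iff]
      exact ⟨hmem, huni⟩
    · refine iff_of_false ?_ ?_
      · intro h
        have : i ∈ W := by rw [h]; exact Finset.mem_singleton_self i
        exact hii ((hW i).1 this).1.symm
      · rintro ⟨hm, -⟩
        exact hii (huni _ hm rfl).symm
  · -- unchanged allowances
    intro j hj0 hjW
    have hji : j ≠ i0 := by
      intro h
      exact hjW ((hW j).2 ⟨h, h ▸ hj0⟩)
    exact (hb2 j hj0 hji).1
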